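/- Let M be a connected matroid with at least two circuits. Then every element of the ground set 𝒞 of the combinatorial derived matroid δM is contained in a triangle, i.e. for every circuit C of M there exist circuits C', C'' of M such that {C, C', C''} is a circuit of δM of size 3. -/

import Mathlib

open Set

namespace DM

variable {α : Type*}

/-- A circuit of a matroid: an inclusion-minimal dependent set. -/
def IsCircuit (M : Matroid α) (C : Set α) : Prop :=
  M.Dep C ∧ ∀ D, M.Dep D → D ⊆ C → D = C

/-- The collection 𝒞 of circuits of `M`. -/
def circuits (M : Matroid α) : Set (Set α) := {C | IsCircuit M C}

/-- The rank of a set: the maximal cardinality of an independent subset. -/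
noncomputable def rk (M : Matroid α) (S : Set α) : ℕ :=
  sSup {m : ℕ | ∃ I, I ⊆ S ∧ M.Indep I ∧ I.ncard = m}

/-- The nullity function n(S) = |S| - r(S). -/
noncomputable def nullity (M : Matroid α) (S : Set α) : ℕ := S.ncard - rk M S

/-- The support of a family of sets. -/
def supp (A : Set (Set α)) : Set α := ⋃₀ A

/-- The initial collection 𝒜₀ = {A ⊆ 𝒞 : |A| > n(supp A)}. -/
noncomputable def A0 (M : Matroid α) : Set (Set (Set α)) :=
  {A | A ⊆ circuits M ∧ nullity M (supp A) < A.ncard}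

/-- The operation ε. -/
def eps (X : Set (Set (Set α))) : Set (Set (Set α)) :=
  X ∪ {B | ∃ A₁ ∈ X, ∃ A₂ ∈ X, A₁ ∩ A₂ ∉ X ∧ ∃ C ∈ A₁ ∩ A₂, B = (A₁ ∪ A₂) \ {C}}

/-- The up-closure ↑X = {A ⊆ 𝒞 : ∃ A' ∈ X, A' ⊆ A} within the ground collection 𝒞. -/
def up (𝒞 : Set (Set α)) (X : Set (Set (Set α))) : Set (Set (Set α)) :=
  {A | A ⊆ 𝒞 ∧ ∃ A' ∈ X, A' ⊆ A}

/-- The increasing sequence 𝒜ᵢ with 𝒜₍ᵢ₊₁₎ = ↑ε(𝒜ᵢ). -/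
noncomputable def Ai (M : Matroid α) : ℕ → Set (Set (Set α))
  | 0 => A0 M
  | (i+1) => up (circuits M) (eps (Ai M i))

/-- 𝒜 = ⋃ᵢ 𝒜ᵢ : the collection of dependent sets of the combinatorial derived matroid δM. -/
noncomputable def derivedDep (M : Matroid α) : Set (Set (Set α)) := ⋃ i, Ai M i

/-! ### Auxiliary lemmas -/

section Aux

variable {M : Matroid α}

lemma IsCircuit.subset_ground {C : Set α} (h : IsCircuit M C) : C ⊆ M.E :=
  h.1.subset_ground

lemma IsCircuit.finite {C : Set α} (hE : M.E.Finite) (h : IsCircuit M C) : C.Finite :=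
  hE.subset h.subset_ground

/-- A proper subset of a circuit is independent. -/
lemma IsCircuit.indep_of_ssubset {C D : Set α} (h : IsCircuit M C) (hD : D ⊆ C)
    (hne : D ≠ C) : M.Indep D := by
  by_contra hind
  exact hne (h.2 D ⟨hind, hD.trans h.subset_ground⟩ hD)

/-- Every finite dependent set contains a circuit. -/
lemma exists_circuit_subset_aux (M : Matroid α) :
    ∀ n (X : Set α), X.Finite → X.ncard ≤ n → M.Dep X →
      ∃ C, IsCircuit M C ∧ C ⊆ X := by
  intro n
  induction n with
  | zero =>
    intro X hfin hle hdep
    have : X = ∅ := (ncard_eq_zero hfin).mp (le_antisymm hle (Nat.zero_le _))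
    exact absurd (this ▸ hdep.nonempty) (by simp)
  | succ n ih =>
    intro X hfin hle hdep
    by_cases h : ∀ D, M.Dep D → D ⊆ X → D = X
    · exact ⟨X, ⟨hdep, h⟩, subset_rfl⟩
    · push_neg at h
      obtain ⟨D, hD, hDX, hne⟩ := h
      have hlt : D.ncard < X.ncard := ncard_lt_ncard (ssubset_of_subset_of_ne hDX hne) hfin
      obtain ⟨C, hC, hCD⟩ := ih D (hfin.subset hDX) (by omega) hD
      exact ⟨C, hC, hCD.trans hDX⟩

lemma exists_circuit_subset (hE : M.E.Finite) {X : Set α} (hdep : M.Dep X) :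
    ∃ C, IsCircuit M C ∧ C ⊆ X :=
  exists_circuit_subset_aux M (X.ncard) X (hE.subset hdep.subset_ground) le_rfl hdep

lemma le_rk {X I : Set α} (hfin : X.Finite) (hI : I ⊆ X) (hind : M.Indep I) :
    I.ncard ≤ rk M X := by
  have hbdd : BddAbove {m : ℕ | ∃ I, I ⊆ X ∧ M.Indep I ∧ I.ncard = m} :=
    ⟨X.ncard, by rintro m ⟨J, hJX, -, rfl⟩; exact ncard_le_ncard hJX hfin⟩
  exact le_csSup hbdd ⟨I, hI, hind, rfl⟩

lemma rk_le {X : Set α} {k : ℕ} (h : ∀ I, I ⊆ X → M.Indep I → I.ncard ≤ k) :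
    rk M X ≤ k := by
  have hne : {m : ℕ | ∃ I, I ⊆ X ∧ M.Indep I ∧ I.ncard = m}.Nonempty :=
    ⟨0, ∅, empty_subset _, M.empty_indep, by simp⟩
  refine csSup_le hne ?_
  rintro m ⟨I, hIX, hind, rfl⟩
  exact h I hIX hind

/-- Circuit elimination: for distinct circuits `C₁, C₂` and `z ∈ C₁ ∩ C₂` there is a
circuit inside `(C₁ ∪ C₂) \ {z}`. -/
lemma circuit_elimination (hE : M.E.Finite) {C₁ C₂ : Set α} (h1 : IsCircuit M C₁)
    (h2 : IsCircuit M C₂) (hne : C₁ ≠ C₂) {z : α} (hz : z ∈ C₁ ∩ C₂) :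
    ∃ C₃, IsCircuit M C₃ ∧ C₃ ⊆ (C₁ ∪ C₂) \ {z} := by
  set U : Set α := C₁ ∪ C₂ with hU
  have hUE : U ⊆ M.E := union_subset h1.subset_ground h2.subset_ground
  have hUfin : U.Finite := hE.subset hUE
  set X : Set α := U \ {z} with hX
  have hXE : X ⊆ M.E := diff_subset.trans hUE
  by_cases hdep : M.Dep X
  · exact exists_circuit_subset hE hdep
  · exfalso
    have hXind : M.Indep X := (Matroid.not_dep_iff hXE).mp hdep
    -- pick f ∈ C₁ \ C₂
    have hnsub : ¬ C₁ ⊆ C₂ := fun hsub => hne (h2.2 C₁ h1.1 hsub)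
    obtain ⟨f, hfC₁, hfC₂⟩ := not_subset.mp hnsub
    have hIind : M.Indep (C₁ \ {f}) :=
      h1.indep_of_ssubset diff_subset (by
        intro h
        exact (h ▸ (fun (hf : f ∈ C₁ \ {f}) => hf.2 rfl)) hfC₁)
    obtain ⟨J, hJ, hIJ⟩ := hIind.subset_isBasis_of_subset
      (diff_subset.trans subset_union_left) hUE
    have hJfin : J.Finite := hUfin.subset hJ.subset
    have hfJ : f ∉ J := by
      intro hfJ
      have : C₁ ⊆ J := by
        intro a ha
        by_cases haf : a = f
        · exact haf ▸ hfJ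
        · exact hIJ ⟨ha, haf⟩
      exact h1.1.not_indep (hJ.indep.subset this)
    have hnsub2 : ¬ C₂ ⊆ J := fun hsub => h2.1.not_indep (hJ.indep.subset hsub)
    obtain ⟨g, hgC₂, hgJ⟩ := not_subset.mp hnsub2
    have hgC₁ : g ∉ C₁ := by
      intro hgC₁
      have hgf : g ≠ f := fun h => hfC₂ (h ▸ hgC₂)
      exact hgJ (hIJ ⟨hgC₁, hgf⟩)
    have hfg : f ≠ g := fun h => hgC₁ (h ▸ hfC₁)
    have hfU : f ∈ U := Or.inl hfC₁
    have hgU : g ∈ U := Or.inr hgC₂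
    have hzU : z ∈ U := Or.inl hz.1
    -- cardinalities
    have hpair : ({f, g} : Set α) ⊆ U := by
      rintro a (rfl | rfl); exacts [hfU, hgU]
    have hJsub : J ⊆ U \ {f, g} := by
      intro a ha
      refine ⟨hJ.subset ha, ?_⟩
      rintro (rfl | rfl); exacts [hfJ ha, hgJ ha]
    have hJcard : J.ncard ≤ U.ncard - 2 := by
      have := ncard_le_ncard hJsub (hUfin.diff)
      rwa [ncard_diff hpair (hUfin.subset hpair), ncard_pair hfg] at this
    have hUcard : 2 ≤ U.ncard := by
      have := ncard_le_ncard hpair hUfin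
      rwa [ncard_pair hfg] at this
    have hXcard : X.ncard = U.ncard - 1 := ncard_diff_singleton_of_mem hzU
    have hJX : J.ncard < X.ncard := by omega
    have hlt : J.encard < X.encard := by
      rw [← hJfin.cast_ncard_eq, ← (hUfin.subset (diff_subset (t := {z}))).cast_ncard_eq]
      exact_mod_cast hJX
    obtain ⟨e, heXJ, heind⟩ := hJ.indep.augment hXind hlt
    have : M.Dep (insert e J) := hJ.insert_dep ⟨heXJ.1.1, heXJ.2⟩
    exact this.not_indep heind

/-- In `𝒜₀`, a singleton family has too small cardinality: nullity of a circuit is at least 1. -/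
lemma one_le_nullity_circuit (hE : M.E.Finite) {C : Set α} (hC : IsCircuit M C) :
    1 ≤ nullity M C := by
  have hfin := hC.finite hE
  have hrk : rk M C ≤ C.ncard - 1 := by
    apply rk_le
    intro I hI hind
    have hne : I ≠ C := fun h => hC.1.not_indep (h ▸ hind)
    have := ncard_lt_ncard (ssubset_of_subset_of_ne hI hne) hfin
    omega
  have hpos : 0 < C.ncard := (ncard_pos hfin).mpr hC.1.nonempty
  have : rk M C ≤ C.ncard - 1 := hrk
  unfold nullity
  omega

/-- Nullity of the union of two distinct circuits is at least 2. -/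
lemma two_le_nullity_union (hE : M.E.Finite) {C₁ C₂ : Set α} (h1 : IsCircuit M C₁)
    (h2 : IsCircuit M C₂) (hne : C₁ ≠ C₂) : 2 ≤ nullity M (C₁ ∪ C₂) := by
  set U : Set α := C₁ ∪ C₂ with hU
  have hUfin : U.Finite := hE.subset (union_subset h1.subset_ground h2.subset_ground)
  have hUcard : 2 ≤ U.ncard := by
    obtain ⟨a, haC₁, haC₂⟩ := not_subset.mp (fun hsub => hne (h2.2 C₁ h1.1 hsub))
    obtain ⟨b, hbC₂, hbC₁⟩ := not_subset.mp (fun hsub => hne ((h1.2 C₂ h2.1 hsub).symm))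
    have hab : a ≠ b := fun h => hbC₁ (h ▸ haC₁)
    have hpair : ({a, b} : Set α) ⊆ U := by
      rintro x (rfl | rfl); exacts [Or.inl haC₁, Or.inr hbC₂]
    have := ncard_le_ncard hpair hUfin
    rwa [ncard_pair hab] at this
  have hrk : rk M U ≤ U.ncard - 2 := by
    apply rk_le
    intro I hI hind
    obtain ⟨x, hxC₁, hxI⟩ := not_subset.mp
      (fun hsub => h1.1.not_indep (hind.subset hsub))
    obtain ⟨y, hyC₂, hyI⟩ := not_subset.mp
      (fun hsub => h2.1.not_indep (hind.subset hsub))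
    by_cases hex : ∃ a, (a ∈ C₁ ∧ a ∉ I) ∧ ∃ b, (b ∈ C₂ ∧ b ∉ I) ∧ a ≠ b
    · obtain ⟨a, ⟨haC₁, haI⟩, b, ⟨hbC₂, hbI⟩, hab⟩ := hex
      have hpair : ({a, b} : Set α) ⊆ U := by
        rintro x (rfl | rfl); exacts [Or.inl haC₁, Or.inr hbC₂]
      have hIsub : I ⊆ U \ {a, b} := by
        intro c hc
        refine ⟨hI hc, ?_⟩
        rintro (rfl | rfl); exacts [haI hc, hbI hc]
      have := ncard_le_ncard hIsub (hUfin.diff)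
      rwa [ncard_diff hpair (hUfin.subset hpair), ncard_pair hab] at this
    · exfalso
      push_neg at hex
      have hxy : x = y := hex x ⟨hxC₁, hxI⟩ y ⟨hyC₂, hyI⟩
      have hxC₂ : x ∈ C₂ := hxy ▸ hyC₂
      -- every element of U outside I equals x
      have hsub : U \ {x} ⊆ I := by
        rintro a ⟨(haC₁ | haC₂), hax⟩
        · by_contra haI
          exact (hax : ¬ a = x) (hex a ⟨haC₁, haI⟩ y ⟨hyC₂, hyI⟩ ▸ hxy.symm ▸ rfl)
        · by_contra haI
          exact (hax : ¬ a = x) (hex x ⟨hxC₁, hxI⟩ a ⟨haC₂, haI⟩).symm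
      obtain ⟨C₃, hC₃, hC₃sub⟩ := circuit_elimination hE h1 h2 hne ⟨hxC₁, hxC₂⟩
      exact hC₃.1.not_indep (hind.subset (hC₃sub.trans hsub))
  unfold nullity
  omega

lemma circuits_finite (hE : M.E.Finite) : (circuits M).Finite :=
  hE.finite_subsets.subset (fun _ hC => hC.subset_ground)

/-- Every member of `Ai M i` is a family of circuits with at least 3 members. -/
lemma Ai_card (hE : M.E.Finite) :
    ∀ i, ∀ A ∈ Ai M i, A ⊆ circuits M ∧ 3 ≤ A.ncard := by
  have hcf := circuits_finite (M := M) hE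
  intro i
  induction i with
  | zero =>
    rintro A ⟨hsub, hlt⟩
    refine ⟨hsub, ?_⟩
    have hAfin : A.Finite := hcf.subset hsub
    by_contra h
    push_neg at h
    have h012 : A.ncard = 0 ∨ A.ncard = 1 ∨ A.ncard = 2 := by omega
    rcases h012 with h0 | h1 | h2
    · rw [h0] at hlt; omega
    · obtain ⟨C₁, rfl⟩ := ncard_eq_one.mp h1
      have hC₁ : IsCircuit M C₁ := hsub rfl
      have : supp ({C₁} : Set (Set α)) = C₁ := sUnion_singleton C₁
      rw [h1, this] at hlt
      have := one_le_nullity_circuit hE hC₁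
      omega
    · obtain ⟨C₁, C₂, hC₁₂, rfl⟩ := ncard_eq_two.mp h2
      have hC₁ : IsCircuit M C₁ := hsub (Or.inl rfl)
      have hC₂ : IsCircuit M C₂ := hsub (Or.inr rfl)
      have hsupp : supp ({C₁, C₂} : Set (Set α)) = C₁ ∪ C₂ := sUnion_pair C₁ C₂
      rw [h2, hsupp] at hlt
      have := two_le_nullity_union hE hC₁ hC₂ hC₁₂
      omega
  | succ i ih =>
    rintro A ⟨hAC, A', hA', hsubA⟩
    have hAfin : A.Finite := hcf.subset hAC
    refine ⟨hAC, ?_⟩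
    rcases hA' with h | ⟨A₁, h₁, A₂, h₂, hint, Cc, hCc, rfl⟩
    · obtain ⟨-, h3⟩ := ih A' h
      exact h3.trans (ncard_le_ncard hsubA hAfin)
    · obtain ⟨hc₁, h3₁⟩ := ih A₁ h₁
      have hA₁fin : A₁.Finite := hcf.subset hc₁
      -- A₂ is not contained in A₁
      have hns : ¬ A₂ ⊆ A₁ := by
        intro hsub
        exact hint (by rwa [inter_eq_right.mpr hsub])
      obtain ⟨b, hbA₂, hbA₁⟩ := not_subset.mp hns
      have hbCc : b ≠ Cc := fun h => hbA₁ (h ▸ hCc.1)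
      have hins : insert b (A₁ \ {Cc}) ⊆ (A₁ ∪ A₂) \ {Cc} := by
        rintro a (rfl | ⟨haA₁, haCc⟩)
        · exact ⟨Or.inr hbA₂, hbCc⟩
        · exact ⟨Or.inl haA₁, haCc⟩
      have hbnot : b ∉ A₁ \ {Cc} := fun h => hbA₁ h.1
      have hcard1 : (A₁ \ {Cc}).ncard = A₁.ncard - 1 :=
        ncard_diff_singleton_of_mem hCc.1
      have hcard2 : (insert b (A₁ \ {Cc})).ncard = (A₁ \ {Cc}).ncard + 1 :=
        ncard_insert_of_notMem hbnot (hA₁fin.diff)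
      have hle : (insert b (A₁ \ {Cc})).ncard ≤ ((A₁ ∪ A₂) \ {Cc}).ncard :=
        ncard_le_ncard hins (hAfin.subset hsubA)
      have hle2 : ((A₁ ∪ A₂) \ {Cc}).ncard ≤ A.ncard := ncard_le_ncard hsubA hAfin
      omega

/-- Existence of a circuit `D ≠ C` meeting `C` with `nullity (C ∪ D) ≤ 2`. -/
lemma exists_partner (hE : M.E.Finite)
    (hconn : ∀ x ∈ M.E, ∀ y ∈ M.E, x ≠ y → ∃ C, IsCircuit M C ∧ x ∈ C ∧ y ∈ C)
    (htwo : ∃ C₁ C₂ : Set α, IsCircuit M C₁ ∧ IsCircuit M C₂ ∧ C₁ ≠ C₂)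
    {C : Set α} (hC : IsCircuit M C) :
    ∃ D x, IsCircuit M D ∧ D ≠ C ∧ x ∈ C ∩ D ∧ nullity M (C ∪ D) ≤ 2 := by
  have hCfin := hC.finite hE
  -- there is an element of the ground set outside C
  have hEC : ∃ f, f ∈ M.E ∧ f ∉ C := by
    obtain ⟨C₁, C₂, h1, h2, hne⟩ := htwo
    by_contra h
    push_neg at h
    have hEsub : M.E ⊆ C := h
    have e1 : C₁ = C := hC.2 C₁ h1.1 (h1.subset_ground.trans hEsub)
    have e2 : C₂ = C := hC.2 C₂ h2.1 (h2.subset_ground.trans hEsub)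
    exact hne (e1.trans e2.symm)
  obtain ⟨f, hfE, hfC⟩ := hEC
  obtain ⟨e, heC⟩ := hC.1.nonempty
  have heE : e ∈ M.E := hC.subset_ground heC
  have hef : e ≠ f := fun h => hfC (h ▸ heC)
  obtain ⟨D₀, hD₀, heD₀, hfD₀⟩ := hconn e heE f hfE hef
  have hD₀C : D₀ ≠ C := fun h => hfC (h ▸ hfD₀)
  -- minimize (D \ C).ncard
  set N : Set ℕ := {n | ∃ D, IsCircuit M D ∧ D ≠ C ∧ (D ∩ C).Nonempty ∧ (D \ C).ncard = n}
    with hN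
  have hNne : (D₀ \ C).ncard ∈ N := ⟨D₀, hD₀, hD₀C, ⟨e, heD₀, heC⟩, rfl⟩
  obtain ⟨D, hD, hDC, ⟨x, hxD, hxC⟩, hDcard⟩ := Nat.sInf_mem ⟨_, hNne⟩
  refine ⟨D, x, hD, hDC, ⟨hxC, hxD⟩, ?_⟩
  set U : Set α := C ∪ D with hU
  have hUE : U ⊆ M.E := union_subset hC.subset_ground hD.subset_ground
  have hUfin : U.Finite := hE.subset hUE
  have hDfin := hD.finite hE
  -- extend C \ {x} to a basis J of U
  have hIind : M.Indep (C \ {x}) :=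
    hC.indep_of_ssubset diff_subset
      (fun h => (h ▸ (fun (hx : x ∈ C \ {x}) => hx.2 rfl)) hxC)
  obtain ⟨J, hJ, hIJ⟩ := hIind.subset_isBasis_of_subset
    (diff_subset.trans subset_union_left) hUE
  have hJfin : J.Finite := hUfin.subset hJ.subset
  have hxJ : x ∉ J := by
    intro hxJ
    have : C ⊆ J := by
      intro a ha
      by_cases hax : a = x
      · exact hax ▸ hxJ
      · exact hIJ ⟨ha, hax⟩
    exact hC.1.not_indep (hJ.indep.subset this)
  set W : Set α := (D \ C) \ J with hW
  have hWfin : W.Finite := (hDfin.diff).diff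
  -- W has at most one element
  have hWcard : W.ncard ≤ 1 := by
    by_contra h
    push_neg at h
    obtain ⟨f', hf'W, g', hg'W, hfg'⟩ := (one_lt_ncard hWfin).mp h
    have hf'U : f' ∈ U := Or.inr hf'W.1.1
    have hdep : M.Dep (insert f' J) := hJ.insert_dep ⟨hf'U, hf'W.2⟩
    obtain ⟨Cf, hCf, hCfsub⟩ := exists_circuit_subset hE hdep
    have hf'Cf : f' ∈ Cf := by
      by_contra hf'Cf
      have : Cf ⊆ J := fun a ha => by
        rcases hCfsub ha with rfl | haJ
        · exact absurd ha hf'Cf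
        · exact haJ
      exact hCf.1.not_indep (hJ.indep.subset this)
    -- Cf meets C
    have hCfC : (Cf ∩ C).Nonempty := by
      by_contra hdis
      rw [not_nonempty_iff_eq_empty] at hdis
      have hCfD : Cf ⊆ D := by
        intro a ha
        have haC : a ∉ C := fun haC =>
          (eq_empty_iff_forall_notMem.mp hdis a) ⟨ha, haC⟩
        rcases hCfsub ha with rfl | haJ
        · exact hf'W.1.1
        · rcases hJ.subset haJ with haC' | haD
          · exact absurd haC' haC
          · exact haD
      have : Cf = D := hD.2 Cf hCf.1 hCfD
      exact (eq_empty_iff_forall_notMem.mp hdis x) ⟨this ▸ hxD, hxC⟩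
    have hCfne : Cf ≠ C := fun h => (h ▸ hf'Cf : f' ∈ C) |> hf'W.1.2
    -- Cf \ C is strictly smaller than D \ C
    have hsubDC : Cf \ C ⊆ (D \ C) \ {g'} := by
      rintro a ⟨ha, haC⟩
      rcases hCfsub ha with rfl | haJ
      · exact ⟨hf'W.1, fun h => hfg' (by exact h)⟩
      · rcases hJ.subset haJ with haC' | haD
        · exact absurd haC' haC
        · exact ⟨⟨haD, haC⟩, fun h => hg'W.2 (h ▸ haJ)⟩
    have hlt : (Cf \ C).ncard < (D \ C).ncard := by
      have h1 : (Cf \ C).ncard ≤ ((D \ C) \ {g'}).ncard :=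
        ncard_le_ncard hsubDC ((hDfin.diff).diff)
      have h2 : ((D \ C) \ {g'}).ncard < (D \ C).ncard :=
        ncard_diff_singleton_lt_of_mem hg'W.1 (hDfin.diff)
      omega
    have hmem : (Cf \ C).ncard ∈ N := ⟨Cf, hCf, hCfne, hCfC, rfl⟩
    have := Nat.sInf_le hmem
    omega
  -- U \ J ⊆ insert x W
  have hUJ : U \ J ⊆ insert x W := by
    rintro a ⟨(haC | haD), haJ⟩
    · left
      by_contra hax
      exact haJ (hIJ ⟨haC, hax⟩)
    · by_cases haC : a ∈ C
      · left
        by_contra hax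
        exact haJ (hIJ ⟨haC, hax⟩)
      · exact Or.inr ⟨⟨haD, haC⟩, haJ⟩
  have hUJcard : (U \ J).ncard ≤ 2 := by
    have h1 : (U \ J).ncard ≤ (insert x W).ncard :=
      ncard_le_ncard hUJ (hWfin.insert x)
    have h2 : (insert x W).ncard ≤ W.ncard + 1 := ncard_insert_le x W
    omega
  have hsplit : (U \ J).ncard + J.ncard = U.ncard :=
    ncard_diff_add_ncard_of_subset hJ.subset hUfin
  have hrk : J.ncard ≤ rk M U := le_rk hUfin hJ.subset hJ.indep
  unfold nullity
  omega

end Aux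

/-- in a connected matroid with at least two circuits, every element of
the ground set 𝒞 of δM lies in a triangle, i.e. a circuit of δM of size 3. -/
theorem derived_mem_triangle (M : Matroid α) (hE : M.E.Finite)
    (hconn : ∀ x ∈ M.E, ∀ y ∈ M.E, x ≠ y → ∃ C, IsCircuit M C ∧ x ∈ C ∧ y ∈ C)
    (htwo : ∃ C₁ C₂ : Set α, IsCircuit M C₁ ∧ IsCircuit M C₂ ∧ C₁ ≠ C₂)
    (C : Set α) (hC : IsCircuit M C) :
    ∃ C' C'' : Set α, IsCircuit M C' ∧ IsCircuit M C'' ∧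
      ({C, C', C''} : Set (Set α)).ncard = 3 ∧
      Minimal (· ∈ derivedDep M) ({C, C', C''} : Set (Set α)) := by
  obtain ⟨D, x, hD, hDC, ⟨hxC, hxD⟩, hnull⟩ := exists_partner hE hconn htwo hC
  obtain ⟨C'', hC'', hC''sub⟩ :=
    circuit_elimination hE hC hD (fun h => hDC h.symm) ⟨hxC, hxD⟩
  have hxC'' : x ∉ C'' := fun h => (hC''sub h).2 rfl
  have hCC'' : C ≠ C'' := fun h => hxC'' (h ▸ hxC)
  have hDC'' : D ≠ C'' := fun h => hxC'' (h ▸ hxD)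
  have hCD : C ≠ D := fun h => hDC h.symm
  set T : Set (Set α) := {C, D, C''} with hT
  have hTfin : T.Finite := (Set.finite_singleton C'').insert D |>.insert C
  have hTcard : T.ncard = 3 := by
    rw [hT, ncard_insert_of_notMem (by simp [hCD, hCC''])
        ((Set.finite_singleton C'').insert D),
      ncard_insert_of_notMem (by simp [hDC'']) (Set.finite_singleton C''),
      ncard_singleton]
  have hsuppT : supp T = C ∪ D := by
    apply subset_antisymm
    · apply sUnion_subset
      rintro Y (rfl | rfl | rfl)
      · exact subset_union_left
      · exact subset_union_right
      · exact hC''sub.trans (diff_subset.trans subset_rfl)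
    · apply union_subset
      · exact subset_sUnion_of_mem (Or.inl rfl)
      · exact subset_sUnion_of_mem (Or.inr (Or.inl rfl))
  have hTA0 : T ∈ A0 M := by
    constructor
    · rintro Y (rfl | rfl | rfl); exacts [hC, hD, hC'']
    · rw [hsuppT, hTcard]; omega
  have hTmem : T ∈ derivedDep M := mem_iUnion.mpr ⟨0, hTA0⟩
  refine ⟨D, C'', hD, hC'', hTcard, hTmem, ?_⟩
  intro B hB hBT
  obtain ⟨i, hBi⟩ := mem_iUnion.mp hB
  obtain ⟨-, h3⟩ := Ai_card hE i B hBi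
  have : B = T := eq_of_subset_of_ncard_le hBT (by omega) hTfin
  exact this ▸ subset_rfl

end DM
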